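/- Let n ≥ 3. The image of the map α : {λ ∈ ℝⁿ : all λ_i > 0} → ℝⁿ, α(λ)_i = Σ_{j ≠ i} 1/(λ_i + λ_j), is an open subset of ℝⁿ. -/

import Mathlib

open Finset

/-- For `n ≥ 3`, the image of the positive cone under the map
`α(λ)_i = Σ_{j ≠ i} 1/(λ_i + λ_j)` is open in `ℝⁿ`. -/
theorem alpha_image_open (n : ℕ) (hn : 3 ≤ n) :
    IsOpen ((fun lam : Fin n → ℝ =>
        fun i : Fin n => ∑ j ∈ Finset.univ.erase i, 1 / (lam i + lam j)) ''
      {lam : Fin n → ℝ | ∀ i, 0 < lam i}) := by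
  set f : (Fin n → ℝ) → (Fin n → ℝ) :=
    fun lam i => ∑ j ∈ Finset.univ.erase i, 1 / (lam i + lam j) with hf
  have hs : IsOpen {lam : Fin n → ℝ | ∀ i, 0 < lam i} := by
    have : {lam : Fin n → ℝ | ∀ i, 0 < lam i}
        = ⋂ i, (fun l : Fin n → ℝ => l i) ⁻¹' Set.Ioi 0 := by
      ext l; simp [Set.mem_iInter]
    rw [this]
    exact isOpen_iInter_of_finite fun i => (continuous_apply i).isOpen_preimage _ isOpen_Ioi
  rw [isOpen_iff_mem_nhds]
  rintro y ⟨lam, hlam, rfl⟩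
  have hpos : ∀ i j : Fin n, 0 < lam i + lam j := fun i j => add_pos (hlam i) (hlam j)
  -- the derivative
  set f' : (Fin n → ℝ) →L[ℝ] (Fin n → ℝ) :=
    ContinuousLinearMap.pi (fun i => ∑ j ∈ Finset.univ.erase i,
      (-((lam i + lam j) ^ 2)⁻¹) •
        (ContinuousLinearMap.proj (R := ℝ) (φ := fun _ : Fin n => ℝ) i
          + ContinuousLinearMap.proj j)) with hf'
  have hder : HasStrictFDerivAt f f' lam := by
    apply hasStrictFDerivAt_pi''
    intro i
    rw [hf', ContinuousLinearMap.proj_pi]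
    have : (fun lam : Fin n → ℝ => f lam i)
        = fun lam : Fin n → ℝ => ∑ j ∈ Finset.univ.erase i, (lam i + lam j)⁻¹ := by
      simp [hf, one_div]
    rw [this]
    apply HasStrictFDerivAt.fun_sum
    intro j hj
    have hlin : HasStrictFDerivAt (fun l : Fin n → ℝ => l i + l j)
        (ContinuousLinearMap.proj (R := ℝ) (φ := fun _ : Fin n => ℝ) i
          + ContinuousLinearMap.proj j) lam :=
      ((ContinuousLinearMap.proj (R := ℝ) (φ := fun _ : Fin n => ℝ) i)
        + ContinuousLinearMap.proj j).hasStrictFDerivAt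
    exact (hasStrictDerivAt_inv (hpos i j).ne').comp_hasStrictFDerivAt lam hlin
  -- injectivity of f'
  have hinj : Function.Injective f' := by
    intro v w hvw
    have hz : f' (v - w) = 0 := by rw [map_sub, hvw, sub_self]
    set u := v - w with hu
    suffices hu0 : u = 0 by
      have := sub_eq_zero.mp hu0; exact this
    -- f' u i = -∑ j≠i, c ij (u i + u j) = 0
    have key : ∀ i, ∑ j ∈ Finset.univ.erase i, ((lam i + lam j) ^ 2)⁻¹ * (u i + u j) = 0 := by
      intro i
      have := congrFun hz i
      simp only [hf', ContinuousLinearMap.pi_apply, ContinuousLinearMap.sum_apply,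
        ContinuousLinearMap.smul_apply, ContinuousLinearMap.add_apply,
        ContinuousLinearMap.proj_apply, smul_eq_mul, Pi.zero_apply] at this
      have h2 : -∑ j ∈ Finset.univ.erase i, ((lam i + lam j) ^ 2)⁻¹ * (u i + u j) = 0 := by
        rw [← this, ← Finset.sum_neg_distrib]
        apply Finset.sum_congr rfl
        intro j _; ring
      linarith
    -- quadratic form
    have hsum0 : ∑ i, ∑ j ∈ Finset.univ.erase i,
        ((lam i + lam j) ^ 2)⁻¹ * (u i * (u i + u j)) = 0 := by
      have : ∀ i, ∑ j ∈ Finset.univ.erase i,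
          ((lam i + lam j) ^ 2)⁻¹ * (u i * (u i + u j))
          = u i * ∑ j ∈ Finset.univ.erase i, ((lam i + lam j) ^ 2)⁻¹ * (u i + u j) := by
        intro i; rw [Finset.mul_sum]; apply Finset.sum_congr rfl; intro j _; ring
      simp [this, key]
    have hswap : ∑ i, ∑ j ∈ Finset.univ.erase i,
        ((lam i + lam j) ^ 2)⁻¹ * (u i * (u i + u j))
        = ∑ i, ∑ j ∈ Finset.univ.erase i,
        ((lam i + lam j) ^ 2)⁻¹ * (u j * (u i + u j)) := by
      rw [Finset.sum_comm' (s' := fun j => Finset.univ.erase j) (t' := Finset.univ)]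
      · apply Finset.sum_congr rfl; intro i _; apply Finset.sum_congr rfl; intro j _
        rw [add_comm (lam j) (lam i), add_comm (u j) (u i)]
      · intro x y; simp [Finset.mem_erase, ne_comm, eq_comm, and_comm]
    have hq : ∑ i, ∑ j ∈ Finset.univ.erase i,
        ((lam i + lam j) ^ 2)⁻¹ * (u i + u j) ^ 2 = 0 := by
      have := hsum0
      rw [hswap] at this
      have h2 : (∑ i, ∑ j ∈ Finset.univ.erase i,
          ((lam i + lam j) ^ 2)⁻¹ * (u i * (u i + u j)))
          + (∑ i, ∑ j ∈ Finset.univ.erase i,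
          ((lam i + lam j) ^ 2)⁻¹ * (u j * (u i + u j)))
          = ∑ i, ∑ j ∈ Finset.univ.erase i,
          ((lam i + lam j) ^ 2)⁻¹ * (u i + u j) ^ 2 := by
        rw [← Finset.sum_add_distrib]
        apply Finset.sum_congr rfl; intro i _
        rw [← Finset.sum_add_distrib]
        apply Finset.sum_congr rfl; intro j _; ring
      linarith [hsum0]
    -- each term nonneg => each zero
    have hterm : ∀ i j : Fin n, j ≠ i → u i + u j = 0 := by
      intro i j hij
      have hnn : ∀ i ∈ (Finset.univ : Finset (Fin n)), 0 ≤ ∑ j ∈ Finset.univ.erase i,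
          ((lam i + lam j) ^ 2)⁻¹ * (u i + u j) ^ 2 := by
        intro i _
        apply Finset.sum_nonneg; intro j _
        positivity
      have h1 : ∑ j ∈ Finset.univ.erase i,
          ((lam i + lam j) ^ 2)⁻¹ * (u i + u j) ^ 2 = 0 :=
        (Finset.sum_eq_zero_iff_of_nonneg hnn).mp hq i (Finset.mem_univ i)
      have hnn2 : ∀ j ∈ Finset.univ.erase i, 0 ≤ ((lam i + lam j) ^ 2)⁻¹ * (u i + u j) ^ 2 := by
        intro j _; positivity
      have h2 := (Finset.sum_eq_zero_iff_of_nonneg hnn2).mp h1 j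
        (Finset.mem_erase.mpr ⟨hij, Finset.mem_univ j⟩)
      have hc : (0:ℝ) < ((lam i + lam j) ^ 2)⁻¹ := inv_pos.mpr (pow_pos (hpos i j) 2)
      have := mul_eq_zero.mp h2
      rcases this with h | h
      · exact absurd h hc.ne'
      · exact pow_eq_zero_iff (by norm_num) |>.mp h
    -- n ≥ 3 forces u = 0
    funext i
    obtain ⟨j, hji⟩ : ∃ j : Fin n, j ≠ i := by
      apply Fintype.exists_ne_of_one_lt_card
      simp; omega
    obtain ⟨k, hki, hkj⟩ : ∃ k : Fin n, k ≠ i ∧ k ≠ j := by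
      have hne : (({i, j} : Finset (Fin n))ᶜ).Nonempty := by
        rw [← Finset.card_pos, Finset.card_compl]
        have h2 : ({i, j} : Finset (Fin n)).card ≤ 2 :=
          (Finset.card_insert_le _ _).trans (by simp)
        have hcard : Fintype.card (Fin n) = n := Fintype.card_fin n
        omega
      obtain ⟨k, hk⟩ := hne
      simp only [Finset.mem_compl, Finset.mem_insert, Finset.mem_singleton, not_or] at hk
      exact ⟨k, hk.1, hk.2⟩
    have h1 := hterm i j hji
    have h2 := hterm i k hki
    have h3 := hterm j k hkj
    simp only [Pi.zero_apply]
    linarith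
  -- upgrade to equiv
  have hsurj : Function.Surjective f' :=
    LinearMap.injective_iff_surjective.mp hinj
  let e0 : (Fin n → ℝ) ≃ₗ[ℝ] (Fin n → ℝ) :=
    LinearEquiv.ofBijective (f' : (Fin n → ℝ) →ₗ[ℝ] (Fin n → ℝ)) ⟨hinj, hsurj⟩
  let e : (Fin n → ℝ) ≃L[ℝ] (Fin n → ℝ) := e0.toContinuousLinearEquiv
  have hcoe : (e : (Fin n → ℝ) →L[ℝ] (Fin n → ℝ)) = f' := by
    ext v; rfl
  have hder' : HasStrictFDerivAt f (e : (Fin n → ℝ) →L[ℝ] (Fin n → ℝ)) lam := by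
    rw [hcoe]; exact hder
  have hmap := hder'.map_nhds_eq_of_equiv
  rw [← hmap]
  exact Filter.image_mem_map (hs.mem_nhds hlam)
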